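/- For every DBM D over n clocks, the zone ⟦D⟧ is nonempty if and only if every cyclic path in D (a path with p₀ = p_m and m ≥ 1) has weight ≥ 0. In particular, consistency of a DBM is equivalent to the absence of negative-weight cycles. -/

import Mathlib

/-- A DBM over `n` clocks: index `0` is the reference clock. -/
abbrev DBM (n : ℕ) := Fin (n + 1) → Fin (n + 1) → WithTop ℝ

/-- The zone of a DBM. -/
def Zone {n : ℕ} (D : DBM n) : Set (Fin (n + 1) → ℝ) :=
  {v | v 0 = 0 ∧ ∀ i j, ((v i - v j : ℝ) : WithTop ℝ) ≤ D i j}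

/-- Weight of the path `p 0, p 1, …, p m` in `D`, computed in `WithTop ℝ`. -/
def pathWeight {n : ℕ} (D : DBM n) (p : ℕ → Fin (n + 1)) (m : ℕ) : WithTop ℝ :=
  ∑ k ∈ Finset.range m, D (p k) (p (k + 1))

namespace ZoneAux

variable {n : ℕ}

/-- Edge weights on `Option (Fin (n+1))`, where `none` is a super-source with
`0`-weight edges to every node and no incoming edges. -/
def A (D : DBM n) : Option (Fin (n + 1)) → Option (Fin (n + 1)) → WithTop ℝ
  | none, none => ⊤
  | none, some _ => 0
  | some _, none => ⊤
  | some i, some j => D i j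

/-- Path weight for the augmented graph. -/
def W (D : DBM n) (p : ℕ → Option (Fin (n + 1))) (m : ℕ) : WithTop ℝ :=
  ∑ k ∈ Finset.range m, A D (p k) (p (k + 1))

lemma W_congr (D : DBM n) {p q : ℕ → Option (Fin (n + 1))} {m : ℕ}
    (h : ∀ t ≤ m, p t = q t) : W D p m = W D q m := by
  unfold W
  refine Finset.sum_congr rfl fun k hk => ?_
  simp only [Finset.mem_range] at hk
  rw [h k (by omega), h (k + 1) (by omega)]

lemma W_add (D : DBM n) (p : ℕ → Option (Fin (n + 1))) (a b : ℕ) :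
    W D p (a + b) = W D p a + ∑ t ∈ Finset.range b, A D (p (a + t)) (p (a + t + 1)) := by
  induction b with
  | zero => simp [W]
  | succ b ih =>
      rw [show a + (b + 1) = (a + b) + 1 from rfl]
      unfold W at *
      rw [Finset.sum_range_succ, ih, Finset.sum_range_succ, add_assoc]

/-- Bellman–Ford iteration values. -/
noncomputable def d (D : DBM n) : ℕ → Option (Fin (n + 1)) → WithTop ℝ
  | 0, j => if j = none then 0 else ⊤
  | (k + 1), j =>
      min (d D k j)
        (Finset.univ.inf' Finset.univ_nonempty fun i => d D k i + A D i j)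

lemma d_zero (D : DBM n) (j : Option (Fin (n + 1))) :
    d D 0 j = if j = none then 0 else ⊤ := rfl

lemma d_succ (D : DBM n) (k : ℕ) (j : Option (Fin (n + 1))) :
    d D (k + 1) j = min (d D k j)
      (Finset.univ.inf' Finset.univ_nonempty fun i => d D k i + A D i j) := rfl

lemma d_succ_le (D : DBM n) (k : ℕ) (j : Option (Fin (n + 1))) :
    d D (k + 1) j ≤ d D k j := by rw [d_succ]; exact min_le_left _ _

lemma d_antitone (D : DBM n) {k l : ℕ} (h : k ≤ l) (j : Option (Fin (n + 1))) :
    d D l j ≤ d D k j := by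
  induction l with
  | zero => simp_all
  | succ l ih =>
      rcases Nat.eq_or_lt_of_le h with h' | h'
      · rw [h']
      · exact le_trans (d_succ_le D l j) (ih (by omega))

lemma d_le_path (D : DBM n) :
    ∀ (m k : ℕ) (p : ℕ → Option (Fin (n + 1))), m ≤ k → p 0 = none →
      d D k (p m) ≤ W D p m := by
  intro m
  induction m with
  | zero =>
      intro k p _ hp0
      rw [hp0]
      have : d D k none ≤ d D 0 none := d_antitone D (Nat.zero_le k) none
      simpa [W, d_zero] using this
  | succ m ih =>
      intro k p hk hp0
      obtain ⟨k', rfl⟩ : ∃ k', k = k' + 1 := ⟨k - 1, by omega⟩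
      have h1 : d D (k' + 1) (p (m + 1)) ≤ d D k' (p m) + A D (p m) (p (m + 1)) := by
        rw [d_succ]
        refine le_trans (min_le_right _ _) ?_
        exact Finset.inf'_le _ (Finset.mem_univ _)
      have h2 : d D k' (p m) ≤ W D p m := ih k' p (by omega) hp0
      calc d D (k' + 1) (p (m + 1)) ≤ d D k' (p m) + A D (p m) (p (m + 1)) := h1
        _ ≤ W D p m + A D (p m) (p (m + 1)) := add_le_add_left h2 _
        _ = W D p (m + 1) := (Finset.sum_range_succ _ _).symm

lemma d_attained (D : DBM n) :
    ∀ (k : ℕ) (j : Option (Fin (n + 1))),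
      d D k j = ⊤ ∨ ∃ m ≤ k, ∃ p : ℕ → Option (Fin (n + 1)),
        p 0 = none ∧ p m = j ∧ W D p m = d D k j := by
  intro k
  induction k with
  | zero =>
      intro j
      cases j with
      | none => exact Or.inr ⟨0, le_rfl, fun _ => none, rfl, rfl, by simp [W, d_zero]⟩
      | some i => exact Or.inl (by simp [d_zero])
  | succ k ih =>
      intro j
      by_cases htop : d D (k + 1) j = ⊤
      · exact Or.inl htop
      rcases le_total (d D k j)
          (Finset.univ.inf' Finset.univ_nonempty fun i => d D k i + A D i j) with h | h
      · -- min equals d D k j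
        have hval : d D (k + 1) j = d D k j := by rw [d_succ]; exact min_eq_left h
        rcases ih j with h' | ⟨m, hm, p, hp0, hpm, hW⟩
        · exact absurd (hval.trans h') htop
        · exact Or.inr ⟨m, by omega, p, hp0, hpm, by rw [hW, hval]⟩
      · have hval : d D (k + 1) j =
            Finset.univ.inf' Finset.univ_nonempty fun i => d D k i + A D i j :=
          min_eq_right h
        obtain ⟨i, _, hi⟩ := Finset.exists_mem_eq_inf' (Finset.univ_nonempty)
          (fun i => d D k i + A D i j)
        rw [hi] at hval
        rcases ih i with h' | ⟨m, hm, p, hp0, hpm, hW⟩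
        · rw [h'] at hval; simp at hval; exact absurd hval htop
        · refine Or.inr ⟨m + 1, by omega, fun t => if t ≤ m then p t else j, by simp [hp0], by
            simp, ?_⟩
          have : W D (fun t => if t ≤ m then p t else j) (m + 1)
              = W D p m + A D (p m) j := by
            simp only [W, Finset.sum_range_succ]
            congr 1
            · refine Finset.sum_congr rfl fun t ht => ?_
              simp only [Finset.mem_range] at ht
              rw [if_pos (by omega : t ≤ m), if_pos (by omega : t + 1 ≤ m)]
            · have h1 : (if m ≤ m then p m else j) = p m := if_pos le_rfl
              have h2 : (if m + 1 ≤ m then p (m + 1) else j) = j := if_neg (by omega)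
              rw [h1, h2]
          rw [this, hW, hval, hpm]

lemma d_le_zero (D : DBM n) (k : ℕ) (hk : 1 ≤ k) (j : Option (Fin (n + 1))) :
    d D k j ≤ 0 := by
  cases j with
  | none =>
      have := d_antitone D (Nat.zero_le k) (none : Option (Fin (n + 1)))
      simpa [d_zero] using this
  | some i =>
      refine le_trans (d_antitone D hk (some i)) ?_
      have h1 : d D 1 (some i) ≤ d D 0 none + A D none (some i) := by
        have h0 : d D 1 (some i) = min (d D 0 (some i))
            (Finset.univ.inf' Finset.univ_nonempty fun x => d D 0 x + A D x (some i)) :=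
          d_succ D 0 (some i)
        rw [h0]
        refine le_trans (min_le_right _ _) ?_
        exact Finset.inf'_le _ (Finset.mem_univ _)
      simpa [d_zero, A] using h1

/-- Cycle removal: any path from the super-source can be shortened to length `≤ n+1`
without increasing its weight, provided `D` has no negative cycles. -/
lemma reduce (D : DBM n)
    (hcyc : ∀ (m : ℕ) (p : ℕ → Fin (n + 1)), 1 ≤ m → p 0 = p m →
      (0 : WithTop ℝ) ≤ pathWeight D p m) :
    ∀ (m : ℕ) (p : ℕ → Option (Fin (n + 1))), p 0 = none →
      ∃ m' ≤ n + 1, ∃ q : ℕ → Option (Fin (n + 1)),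
        q 0 = none ∧ q m' = p m ∧ W D q m' ≤ W D p m := by
  intro m
  induction m using Nat.strong_induction_on with
  | _ m IH =>
  intro p hp0
  by_cases hm : m ≤ n + 1
  · exact ⟨m, hm, p, hp0, rfl, le_rfl⟩
  push_neg at hm
  by_cases htop : W D p m = ⊤
  · cases hpm : p m with
    | none =>
        refine ⟨0, by omega, fun _ => none, ?_, ?_, ?_⟩
        · rfl
        · rfl
        · rw [htop]; exact le_top
    | some j =>
        refine ⟨1, by omega, fun t => if t = 0 then none else some j, by simp, ?_, ?_⟩
        · simp [hpm]
        · rw [htop]; exact le_top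
  -- all edges along p are finite
  have hedge : ∀ t < m, A D (p t) (p (t + 1)) ≠ ⊤ := by
    intro t ht h
    exact htop (WithTop.sum_eq_top.2 ⟨t, Finset.mem_range.2 ht, h⟩)
  have hnone : ∀ t, 1 ≤ t → t ≤ m → p t ≠ none := by
    intro t h1 h2 h
    have h3 : t - 1 < m := by omega
    have := hedge (t - 1) h3
    rw [show t - 1 + 1 = t from by omega, h] at this
    cases hpt : p (t - 1) with
    | none => rw [hpt] at this; exact this rfl
    | some x => rw [hpt] at this; exact this rfl
  -- pigeonhole
  have hcard : Fintype.card (Option (Fin (n + 1))) < Fintype.card (Fin (m + 1)) := by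
    simp; omega
  obtain ⟨a, b, hab, heq⟩ :=
    Fintype.exists_ne_map_eq_of_card_lt (fun t : Fin (m + 1) => p t) hcard
  -- wlog a < b
  obtain ⟨k, l, hkl, hlm, hpk⟩ : ∃ k l : ℕ, k < l ∧ l ≤ m ∧ p k = p l := by
    rcases lt_or_gt_of_ne (Fin.val_ne_of_ne hab) with h | h
    · exact ⟨a, b, h, by omega, heq⟩
    · exact ⟨b, a, h, by omega, heq.symm⟩
  have hk1 : 1 ≤ k := by
    by_contra h
    have hk0 : k = 0 := by omega
    have := hnone l (by omega) hlm
    rw [← hpk, hk0, hp0] at this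
    exact this rfl
  -- splice out the cycle from k to l
  set c := l - k with hc
  set s := m - l with hs
  have hmeq : m = k + (c + s) := by omega
  have hleq : l = k + c := by omega
  set q : ℕ → Option (Fin (n + 1)) := fun t => if t ≤ k then p t else p (t + c) with hq
  set m' := k + s with hm'
  have hqm' : q m' = p m := by
    by_cases hs0 : s = 0
    · have : m' = k := by omega
      rw [this]
      simp only [q, if_pos le_rfl]
      rw [hpk]
      congr 1
      omega
    · have h1 : ¬ m' ≤ k := by omega
      simp only [q, if_neg h1]
      congr 1
      omega
  set cyc := ∑ t ∈ Finset.range c, A D (p (k + t)) (p (k + t + 1)) with hcycdef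
  set suf := ∑ t ∈ Finset.range s, A D (p (l + t)) (p (l + t + 1)) with hsufdef
  -- weight computations
  have hWp : W D p m = (W D p k + cyc) + suf := by
    have e1 : W D p m = W D p l + suf := by
      rw [show m = l + s from by omega, W_add]
    have e2 : W D p l = W D p k + cyc := by
      rw [hleq, W_add]
    rw [e1, e2]
  have hWq : W D q m' = W D p k + suf := by
    rw [hm', W_add]
    congr 1
    · refine W_congr D fun t ht => ?_
      simp only [q, if_pos ht]
    · refine Finset.sum_congr rfl fun t ht => ?_
      have h2 : q (k + t + 1) = p (l + t + 1) := by
        simp only [q, if_neg (by omega : ¬ k + t + 1 ≤ k)]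
        congr 1
        omega
      rcases Nat.eq_zero_or_pos t with rfl | htpos
      · have h1 : q (k + 0) = p (l + 0) := by
          simp only [q, if_pos (by omega : k + 0 ≤ k)]
          simpa using hpk
        rw [h1, h2]
      · have h1 : q (k + t) = p (l + t) := by
          simp only [q, if_neg (by omega : ¬ k + t ≤ k)]
          congr 1
          omega
        rw [h1, h2]
  -- the removed cycle has nonnegative weight
  have hcycnn : (0 : WithTop ℝ) ≤ cyc := by
    set r : ℕ → Fin (n + 1) := fun t => (p (k + min t c)).getD 0 with hr
    have hrc : 1 ≤ c := by omega
    have hr0 : r 0 = r c := by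
      simp only [r, Nat.min_self, Nat.min_eq_left (Nat.zero_le c)]
      rw [show k + 0 = k from rfl, hpk, hleq]
    have hcval : pathWeight D r c = cyc := by
      refine Finset.sum_congr rfl fun t ht => ?_
      simp only [Finset.mem_range] at ht
      have hmin1 : min t c = t := by omega
      have hmin2 : min (t + 1) c = t + 1 := by omega
      have hne1 : p (k + t) ≠ none := hnone (k + t) (by omega) (by omega)
      have hne2 : p (k + t + 1) ≠ none := hnone (k + t + 1) (by omega) (by omega)
      obtain ⟨x, hx⟩ := Option.ne_none_iff_exists'.1 hne1
      obtain ⟨y, hy⟩ := Option.ne_none_iff_exists'.1 hne2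
      simp only [r, hmin1, hmin2, hx]
      rw [show k + (t + 1) = k + t + 1 from by omega, hy]
      simp [A]
    rw [← hcval]
    exact hcyc c r hrc hr0
  have hle : W D q m' ≤ W D p m := by
    rw [hWq, hWp]
    have : W D p k + suf ≤ (W D p k + cyc) + suf := by
      refine add_le_add_left ?_ _
      exact le_add_of_nonneg_right hcycnn
    exact this
  have hm'lt : m' < m := by omega
  obtain ⟨m'', hm'', q', hq'0, hq'm, hle'⟩ := IH m' hm'lt q (by simp [q, hp0])
  exact ⟨m'', hm'', q', hq'0, hq'm.trans hqm', hle'.trans hle⟩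

lemma A_some_some (D : DBM n) (i j : Fin (n + 1)) : A D (some i) (some j) = D i j := rfl

lemma triangle (D : DBM n)
    (hcyc : ∀ (m : ℕ) (p : ℕ → Fin (n + 1)), 1 ≤ m → p 0 = p m →
      (0 : WithTop ℝ) ≤ pathWeight D p m)
    (a b : Option (Fin (n + 1))) :
    d D (n + 2) b ≤ d D (n + 2) a + A D a b := by
  rcases d_attained D (n + 2) a with h | ⟨m, hm, p, hp0, hpm, hW⟩
  · rw [h]; simp
  · set p' : ℕ → Option (Fin (n + 1)) := fun t => if t ≤ m then p t else b with hp'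
    have hW' : W D p' (m + 1) = d D (n + 2) a + A D a b := by
      have heq : W D p' (m + 1) = W D p m + A D (p m) b := by
        simp only [p', W, Finset.sum_range_succ]
        congr 1
        · refine Finset.sum_congr rfl fun t ht => ?_
          simp only [Finset.mem_range] at ht
          rw [if_pos (by omega : t ≤ m), if_pos (by omega : t + 1 ≤ m)]
        · have h1 : (if m ≤ m then p m else b) = p m := if_pos le_rfl
          have h2 : (if m + 1 ≤ m then p (m + 1) else b) = b := if_neg (by omega)
          rw [h1, h2]
      rw [heq, hW, hpm]
    obtain ⟨m'', hm'', q, hq0, hqm, hle⟩ := reduce D hcyc (m + 1) p'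
      (by simp only [p', if_pos (Nat.zero_le m)]; exact hp0)
    have hqb : q m'' = b := by
      rw [hqm]; simp only [p', if_neg (by omega : ¬ m + 1 ≤ m)]
    calc d D (n + 2) b = d D (n + 2) (q m'') := by rw [hqb]
      _ ≤ W D q m'' := d_le_path D m'' (n + 2) q (by omega) hq0
      _ ≤ W D p' (m + 1) := hle
      _ = _ := hW'

end ZoneAux

/-- the zone of a DBM is nonempty iff every cyclic path has nonnegative
weight, i.e. consistency is equivalent to the absence of negative-weight cycles. -/
theorem zone_nonempty_iff_no_negative_cycle {n : ℕ} (D : DBM n) :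
    (Zone D).Nonempty ↔
      ∀ (m : ℕ) (p : ℕ → Fin (n + 1)), 1 ≤ m → p 0 = p m →
        (0 : WithTop ℝ) ≤ pathWeight D p m := by
  constructor
  · rintro ⟨v, hv0, hv⟩ m p hm hp
    have key : ((v (p 0) - v (p m) : ℝ) : WithTop ℝ) ≤ pathWeight D p m := by
      calc ((v (p 0) - v (p m) : ℝ) : WithTop ℝ)
          = ((∑ k ∈ Finset.range m, (v (p k) - v (p (k + 1))) : ℝ) : WithTop ℝ) := by
            rw [Finset.sum_range_sub' (fun k => v (p k)) m]
        _ = ∑ k ∈ Finset.range m, ((v (p k) - v (p (k + 1)) : ℝ) : WithTop ℝ) := by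
            push_cast; rfl
        _ ≤ pathWeight D p m := Finset.sum_le_sum fun k _ => hv _ _
    rw [hp] at key
    simpa using key
  · intro hcyc
    have htri := ZoneAux.triangle D hcyc
    have hle0 : ∀ j, ZoneAux.d D (n + 2) j ≤ 0 := ZoneAux.d_le_zero D (n + 2) (by omega)
    have hfin : ∀ i : Fin (n + 1), ∃ r : ℝ,
        (r : WithTop ℝ) = ZoneAux.d D (n + 2) (some i) := by
      intro i
      refine WithTop.ne_top_iff_exists.1 ?_
      exact ((hle0 (some i)).trans_lt (WithTop.coe_lt_top 0)).ne
    choose f hf using hfin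
    refine ⟨fun i => f 0 - f i, by simp, ?_⟩
    intro i j
    have h := htri (some i) (some j)
    rw [ZoneAux.A_some_some, ← hf i, ← hf j] at h
    rcases eq_or_ne (D i j) ⊤ with hD | hD
    · rw [hD]; exact le_top
    · obtain ⟨c, hc⟩ := WithTop.ne_top_iff_exists.1 hD
      rw [← hc] at h ⊢
      have h' : f j ≤ f i + c := by exact_mod_cast h
      have heq : ((f 0 - f i) - (f 0 - f j) : ℝ) = f j - f i := by ring
      rw [heq]
      exact_mod_cast (by linarith : f j - f i ≤ c)
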